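/- arXiv:0910.0292 — 2 statements merged into one kernel-verified Lean document; each statement's English description precedes it below -/
import Mathlib

section
/- Let E be the 'infinite clock' graph: E⁰ = {v, w₁, w₂, …}, E¹ = {e₁, e₂, …} with s(e_i) = v and r(e_i) = w_i for all i ≥ 1, and let K be a field. Then the two-sided ideal of the Leavitt path algebra L_K(E) generated by v − e₁e₁* is not generated by any set of elements of the form u + Σ_{k=1}^m λ_k gᵏ with u ∈ E⁰, g a cycle based at u (possibly trivial), and λ_k ∈ K. -/
/-- A directed graph with vertex type `V` and edge type `Ed`. -/
structure DirGraph (V Ed : Type) where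
  src : Ed → V
  rng : Ed → V

variable {V Ed : Type}

/-- Generators of the Leavitt path algebra: vertices, real edges, ghost edges. -/
abbrev LGen (V Ed : Type) : Type := V ⊕ Ed ⊕ Ed

variable (K : Type) [Field K]

/-- The vertex generator inside the free algebra. -/
def fvtx (v : V) : FreeAlgebra K (LGen V Ed) := FreeAlgebra.ι K (Sum.inl v)
/-- The real-edge generator inside the free algebra. -/
def fre (e : Ed) : FreeAlgebra K (LGen V Ed) := FreeAlgebra.ι K (Sum.inr (Sum.inl e))
/-- The ghost-edge generator inside the free algebra. -/
def fge (e : Ed) : FreeAlgebra K (LGen V Ed) := FreeAlgebra.ι K (Sum.inr (Sum.inr e))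

variable (G : DirGraph V Ed)

open scoped Classical in
/-- The defining relations of the Leavitt path algebra. -/
inductive LeavittRel : FreeAlgebra K (LGen V Ed) → FreeAlgebra K (LGen V Ed) → Prop
  | vv (v w : V) : LeavittRel (fvtx K v * fvtx K w) (if v = w then fvtx K v else 0)
  | se (e : Ed) : LeavittRel (fvtx K (G.src e) * fre K e) (fre K e)
  | er (e : Ed) : LeavittRel (fre K e * fvtx K (G.rng e)) (fre K e)
  | rg (e : Ed) : LeavittRel (fvtx K (G.rng e) * fge K e) (fge K e)
  | gs (e : Ed) : LeavittRel (fge K e * fvtx K (G.src e)) (fge K e)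
  | gf (e f : Ed) : LeavittRel (fge K e * fre K f) (if e = f then fvtx K (G.rng e) else 0)
  | ck (v : V) (hfin : {e : Ed | G.src e = v}.Finite) (hne : {e : Ed | G.src e = v}.Nonempty) :
      LeavittRel (fvtx K v) (∑ e ∈ hfin.toFinset, fre K e * fge K e)

/-- The Leavitt path algebra `L_K(E)`. -/
abbrev LPA : Type := RingQuot (LeavittRel K G)

/-- The image of a vertex in the Leavitt path algebra. -/
def vtx (v : V) : LPA K G := RingQuot.mkAlgHom K (LeavittRel K G) (fvtx K v)
/-- The image of a real edge in the Leavitt path algebra. -/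
def re (e : Ed) : LPA K G := RingQuot.mkAlgHom K (LeavittRel K G) (fre K e)
/-- The image of a ghost edge in the Leavitt path algebra. -/
def ge (e : Ed) : LPA K G := RingQuot.mkAlgHom K (LeavittRel K G) (fge K e)

/-- The element `e₁ ⋯ e_n` of the Leavitt path algebra given by a list of edges. -/
def pathProd (l : List Ed) : LPA K G := (l.map (re K G)).prod

/-- The element `μ* = e_n* ⋯ e₁*` of the Leavitt path algebra given by a list of edges. -/
def ghostStar (l : List Ed) : LPA K G := (l.reverse.map (ge K G)).prod

/-- `l` is a path from `u` to `v`: a nonempty compatible list of edges with source `u` and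
range `v`. -/
structure IsPathFromTo (G : DirGraph V Ed) (l : List Ed) (u v : V) : Prop where
  ne : l ≠ []
  chain : l.Chain' fun e f => G.rng e = G.src f
  src_eq : G.src (l.head ne) = u
  rng_eq : G.rng (l.getLast ne) = v

/-- A closed path based at `v`. -/
def IsClosedPathAt (G : DirGraph V Ed) (l : List Ed) (v : V) : Prop := IsPathFromTo G l v v

/-- A closed simple path based at `v`. -/
def IsCSPAt (G : DirGraph V Ed) (l : List Ed) (v : V) : Prop :=
  IsPathFromTo G l v v ∧ ∀ e ∈ l.tail, G.src e ≠ v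

/-- A (nontrivial) cycle based at `v`: a closed path whose sources are pairwise distinct. -/
def IsCycleListAt (G : DirGraph V Ed) (l : List Ed) (v : V) : Prop :=
  IsPathFromTo G l v v ∧ (l.map G.src).Nodup

/-- The preorder on vertices: `u ≥ v` iff `u = v` or there is a path from `u` to `v`. -/
def Reaches (G : DirGraph V Ed) (u v : V) : Prop := u = v ∨ ∃ l, IsPathFromTo G l u v

/-- `c` is (the element of `L_K(E)` given by) a possibly trivial cycle based at `v`. -/
def IsCycleElemAt (v : V) (c : LPA K G) : Prop :=
  c = vtx K G v ∨ ∃ l, IsCycleListAt G l v ∧ c = pathProd K G l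

/-- `x` has the form `v + ∑_{k=1}^m λ_k g^k` for a (possibly trivial) cycle `g` based at `v`. -/
def IsCycleGenElt (x : LPA K G) : Prop :=
  ∃ (v : V) (c : LPA K G), IsCycleElemAt K G v c ∧ ∃ (m : ℕ) (lam : ℕ → K),
    x = vtx K G v + ∑ k ∈ Finset.range m, lam (k + 1) • c ^ (k + 1)

/-- A hereditary subset of vertices. -/
def Hereditary (G : DirGraph V Ed) (H : Set V) : Prop :=
  ∀ u ∈ H, ∀ v, Reaches G u v → v ∈ H

/-- A saturated subset of vertices. -/
def Saturated (G : DirGraph V Ed) (H : Set V) : Prop :=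
  ∀ v : V, ({e : Ed | G.src e = v}).Finite → ({e : Ed | G.src e = v}).Nonempty →
    (∀ e : Ed, G.src e = v → G.rng e ∈ H) → v ∈ H

/-- The hereditary saturated closure of a set of vertices. -/
def HSClosure (G : DirGraph V Ed) (X : Set V) : Set V :=
  ⋂₀ {H : Set V | X ⊆ H ∧ Hereditary G H ∧ Saturated G H}


/-- The "infinite clock" graph: one vertex `v = none` emitting, for every `i : ℕ`,
an edge `eᵢ = i` with range `wᵢ = some i`. -/
def clockGraph : DirGraph (Option ℕ) ℕ where
  src _ := none
  rng i := some i

section ClockAux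

/-- generator images for the scalar representation ψ -/
def psiGen : LGen (Option ℕ) ℕ → K
  | Sum.inl none => 1
  | Sum.inl (some _) => 0
  | Sum.inr _ => 0

/-- generator images for the matrix representation φ -/
def phiGen : LGen (Option ℕ) ℕ → Matrix (Fin 2) (Fin 2) K
  | Sum.inl none => !![1,0;0,0]
  | Sum.inl (some 0) => !![0,0;0,1]
  | Sum.inl (some (_+1)) => 0
  | Sum.inr (Sum.inl 0) => !![0,1;0,0]
  | Sum.inr (Sum.inl (_+1)) => 0
  | Sum.inr (Sum.inr 0) => !![0,0;1,0]
  | Sum.inr (Sum.inr (_+1)) => 0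

lemma clock_ck_false (v : Option ℕ) (hfin : {e : ℕ | clockGraph.src e = v}.Finite)
    (hne : {e : ℕ | clockGraph.src e = v}.Nonempty) : False := by
  obtain ⟨e, he⟩ := hne
  simp only [clockGraph, Set.mem_setOf_eq] at he
  subst he
  have huniv : {e : ℕ | clockGraph.src e = none} = Set.univ := by
    ext e; simp [clockGraph]
  rw [huniv] at hfin
  exact Set.infinite_univ hfin

lemma psi_rel : ∀ ⦃a b⦄, LeavittRel K clockGraph a b →
    FreeAlgebra.lift K (psiGen K) a = FreeAlgebra.lift K (psiGen K) b := by
  intro a b h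
  cases h with
  | ck v hfin hne => exact (clock_ck_false v hfin hne).elim
  | vv v w =>
      rcases v with _ | v <;> rcases w with _ | w <;>
        simp [fvtx, psiGen, apply_ite (FreeAlgebra.lift K (psiGen K))]
  | se e => simp [fvtx, fre, psiGen, clockGraph]
  | er e => simp [fvtx, fre, psiGen, clockGraph]
  | rg e => simp [fvtx, fge, psiGen, clockGraph]
  | gs e => simp [fvtx, fge, psiGen, clockGraph]
  | gf e f =>
      simp [fvtx, fre, fge, psiGen, clockGraph,
        apply_ite (FreeAlgebra.lift K (psiGen K))]

lemma phi_rel : ∀ ⦃a b⦄, LeavittRel K clockGraph a b →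
    FreeAlgebra.lift K (phiGen K) a = FreeAlgebra.lift K (phiGen K) b := by
  intro a b h
  cases h with
  | ck v hfin hne => exact (clock_ck_false v hfin hne).elim
  | vv v w =>
      rcases v with _ | (_ | v) <;> rcases w with _ | (_ | w) <;>
        simp [fvtx, phiGen, apply_ite (FreeAlgebra.lift K (phiGen K))] <;>
        (ext i; fin_cases i <;>
          simp [Matrix.mul_apply, Fin.sum_univ_two] <;>
          (rename_i j; fin_cases j <;> simp))
  | se e =>
      rcases e with _ | e <;>
        simp [fvtx, fre, phiGen, clockGraph] <;>
        (ext i; fin_cases i <;>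
          simp [Matrix.mul_apply, Fin.sum_univ_two])
  | er e =>
      rcases e with _ | e <;>
        simp [fvtx, fre, phiGen, clockGraph] <;>
        (ext i; fin_cases i <;>
          simp [Matrix.mul_apply, Fin.sum_univ_two])
  | rg e =>
      rcases e with _ | e <;>
        simp [fvtx, fge, phiGen, clockGraph] <;>
        (ext i; fin_cases i <;>
          simp [Matrix.mul_apply, Fin.sum_univ_two])
  | gs e =>
      rcases e with _ | e <;>
        simp [fvtx, fge, phiGen, clockGraph] <;>
        (ext i; fin_cases i <;>
          simp [Matrix.mul_apply, Fin.sum_univ_two])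
  | gf e f =>
      rcases e with _ | e <;> rcases f with _ | f <;>
        simp [fvtx, fre, fge, phiGen, clockGraph,
          apply_ite (FreeAlgebra.lift K (phiGen K))] <;>
        (ext i; fin_cases i <;>
          simp [Matrix.mul_apply, Fin.sum_univ_two])

/-- The scalar representation. -/
def psiHom : LPA K clockGraph →ₐ[K] K :=
  RingQuot.liftAlgHom K ⟨FreeAlgebra.lift K (psiGen K), psi_rel K⟩

/-- The matrix representation. -/
def phiHom : LPA K clockGraph →ₐ[K] Matrix (Fin 2) (Fin 2) K :=
  RingQuot.liftAlgHom K ⟨FreeAlgebra.lift K (phiGen K), phi_rel K⟩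

lemma psiHom_vtx (v : Option ℕ) :
    psiHom K (vtx K clockGraph v) = psiGen K (Sum.inl v) := by
  simp [psiHom, vtx, fvtx, RingQuot.liftAlgHom_mkAlgHom_apply]

lemma psiHom_re (e : ℕ) :
    psiHom K (re K clockGraph e) = psiGen K (Sum.inr (Sum.inl e)) := by
  simp [psiHom, re, fre, RingQuot.liftAlgHom_mkAlgHom_apply]

lemma psiHom_ge (e : ℕ) :
    psiHom K (ge K clockGraph e) = psiGen K (Sum.inr (Sum.inr e)) := by
  simp [psiHom, ge, fge, RingQuot.liftAlgHom_mkAlgHom_apply]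

lemma phiHom_vtx (v : Option ℕ) :
    phiHom K (vtx K clockGraph v) = phiGen K (Sum.inl v) := by
  simp [phiHom, vtx, fvtx, RingQuot.liftAlgHom_mkAlgHom_apply]

lemma phiHom_re (e : ℕ) :
    phiHom K (re K clockGraph e) = phiGen K (Sum.inr (Sum.inl e)) := by
  simp [phiHom, re, fre, RingQuot.liftAlgHom_mkAlgHom_apply]

lemma phiHom_ge (e : ℕ) :
    phiHom K (ge K clockGraph e) = phiGen K (Sum.inr (Sum.inr e)) := by
  simp [phiHom, ge, fge, RingQuot.liftAlgHom_mkAlgHom_apply]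

lemma no_clock_cycle (l : List ℕ) (v : Option ℕ) (h : IsCycleListAt clockGraph l v) :
    False := by
  obtain ⟨⟨hne, _, hsrc, hrng⟩, _⟩ := h
  simp only [clockGraph] at hsrc hrng
  rw [← hsrc] at hrng
  cases hrng

lemma vtx_mul_self (v : Option ℕ) :
    vtx K clockGraph v * vtx K clockGraph v = vtx K clockGraph v := by
  have h := RingQuot.mkAlgHom_rel K (LeavittRel.vv (K := K) (G := clockGraph) v v)
  simpa [vtx, map_mul] using h

lemma vtx_pow (v : Option ℕ) (n : ℕ) :
    vtx K clockGraph v ^ (n + 1) = vtx K clockGraph v := by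
  induction n with
  | zero => simp
  | succ n ih => rw [pow_succ, ih, vtx_mul_self]

end ClockAux

/-- in the infinite clock, the two-sided ideal generated by `v - e₁e₁*` is not
generated by any set of elements of the form `u + ∑ λ_k g^k` with `g` a (possibly trivial)
cycle based at `u`. -/
theorem clock_ideal_not_cycle_generated :
    ¬ ∃ S : Set (LPA K clockGraph),
        (∀ x ∈ S, IsCycleGenElt K clockGraph x) ∧
        TwoSidedIdeal.span S =
          TwoSidedIdeal.span
            {vtx K clockGraph (none : Option ℕ) - re K clockGraph 0 * ge K clockGraph 0} := by
  rintro ⟨S, hS, hspan⟩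
  set x₀ : LPA K clockGraph :=
    vtx K clockGraph (none : Option ℕ) - re K clockGraph 0 * ge K clockGraph 0 with hx₀def
  -- φ kills x₀
  have hφx₀ : phiHom K x₀ = 0 := by
    rw [hx₀def, map_sub, map_mul, phiHom_vtx, phiHom_re, phiHom_ge]
    simp only [phiGen]
    ext i j
    fin_cases i <;> fin_cases j <;> simp [Matrix.mul_apply, Fin.sum_univ_two]
  -- ψ(x₀) = 1
  have hψx₀ : psiHom K x₀ = 1 := by
    rw [hx₀def, map_sub, map_mul, psiHom_vtx, psiHom_re, psiHom_ge]
    simp [psiGen]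
  -- ψ kills all elements of S
  have hψS : ∀ x ∈ S, psiHom K x = 0 := by
    intro x hx
    obtain ⟨u, c, hc, m, lam, hxe⟩ := hS x hx
    have hcu : c = vtx K clockGraph u := by
      rcases hc with h | ⟨l, hl, _⟩
      · exact h
      · exact (no_clock_cycle l u hl).elim
    have hxe' : x = (1 + ∑ k ∈ Finset.range m, lam (k + 1)) • vtx K clockGraph u := by
      rw [hxe, hcu]
      rw [Finset.sum_congr rfl fun k _ => by rw [vtx_pow K u k]]
      rw [← Finset.sum_smul, add_smul, one_smul]
    -- x lies in the span of {x₀}, hence in ker φ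
    have hxI : x ∈ TwoSidedIdeal.span {x₀} := by
      rw [← hspan]; exact TwoSidedIdeal.subset_span hx
    have hφx : phiHom K x = 0 := by
      have := TwoSidedIdeal.mem_span_iff.mp hxI (TwoSidedIdeal.ker (phiHom K))
        (by intro y hy
            rw [Set.mem_singleton_iff] at hy
            rw [SetLike.mem_coe, TwoSidedIdeal.mem_ker, hy, hφx₀])
      rwa [TwoSidedIdeal.mem_ker] at this
    rcases u with _ | i
    · -- u = none : coefficient must vanish, by looking at φ
      rw [hxe', map_smul, phiHom_vtx] at hφx
      simp only [phiGen] at hφx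
      have h00 := congrFun (congrFun hφx 0) 0
      simp [Matrix.smul_apply] at h00
      rw [hxe', map_smul, psiHom_vtx, h00]
      simp
    · rw [hxe', map_smul, psiHom_vtx]
      simp [psiGen]
  -- but x₀ ∈ span S and ψ(x₀) = 1 ≠ 0
  have hx₀S : x₀ ∈ TwoSidedIdeal.span S := by
    rw [hspan]; exact TwoSidedIdeal.subset_span rfl
  have h0 : psiHom K x₀ = 0 := by
    have := TwoSidedIdeal.mem_span_iff.mp hx₀S (TwoSidedIdeal.ker (psiHom K))
      (by intro y hy
          rw [SetLike.mem_coe, TwoSidedIdeal.mem_ker]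
          exact hψS y hy)
    rwa [TwoSidedIdeal.mem_ker] at this
  rw [hψx₀] at h0
  exact one_ne_zero h0
end

section
/- Let E be an arbitrary directed graph and S ⊆ E⁰. If v lies in the hereditary saturated closure of S and there is a nontrivial cycle based at v, then there exists u ∈ S with u ≥ v. -/
variable {V Ed : Type}

variable (K : Type) [Field K]

variable (G : DirGraph V Ed)

lemma IsPathFromTo.trans {G : DirGraph V Ed} {l₁ l₂ : List Ed} {u w v : V}
    (h₁ : IsPathFromTo G l₁ u w) (h₂ : IsPathFromTo G l₂ w v) :
    IsPathFromTo G (l₁ ++ l₂) u v := by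
  refine ⟨by simp [h₁.ne], ?_, ?_, ?_⟩
  · refine List.IsChain.append h₁.chain h₂.chain ?_
    intro x hx y hy
    rw [List.getLast?_eq_getLast h₁.ne] at hx
    rw [List.head?_eq_head h₂.ne] at hy
    cases hx; cases hy
    rw [h₁.rng_eq, h₂.src_eq]
  · rw [show (l₁ ++ l₂).head (by simp [h₁.ne]) = l₁.head h₁.ne from
      List.head_append_of_ne_nil h₁.ne, h₁.src_eq]
  · rw [List.getLast_append_right h₂.ne, h₂.rng_eq]

lemma Reaches.trans' {G : DirGraph V Ed} {u w v : V}
    (h₁ : Reaches G u w) (h₂ : Reaches G w v) : Reaches G u v := by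
  rcases h₁ with rfl | ⟨l₁, h₁⟩
  · exact h₂
  rcases h₂ with rfl | ⟨l₂, h₂⟩
  · exact Or.inr ⟨l₁, h₁⟩
  · exact Or.inr ⟨l₁ ++ l₂, h₁.trans h₂⟩

lemma reaches_rng_head {G : DirGraph V Ed} {e : Ed} {l : List Ed} {u v : V}
    (h : IsPathFromTo G (e :: l) u v) : Reaches G (G.rng e) v := by
  rcases l with _ | ⟨f, l⟩
  · exact Or.inl (h.rng_eq)
  · refine Or.inr ⟨f :: l, ⟨by simp, (List.isChain_cons_cons.mp h.chain).2, ?_, ?_⟩⟩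
    · exact ((List.isChain_cons_cons.mp h.chain).1).symm
    · simpa using h.rng_eq

/-- if `v` lies in the hereditary saturated closure of `S` and there is a nontrivial
cycle based at `v`, then some `u ∈ S` satisfies `u ≥ v`. -/
theorem exists_mem_reaches_of_mem_closure (G : DirGraph V Ed) (S : Set V) (v : V)
    (hv : v ∈ HSClosure G S) (hcyc : ∃ l : List Ed, IsCycleListAt G l v) :
    ∃ u ∈ S, Reaches G u v := by
  set H : Set V := {w | Reaches G w v → ∃ u ∈ S, Reaches G u v} with hH
  have hvH : v ∈ H := by
    refine hv H ⟨fun u hu hr => ⟨u, hu, hr⟩, ?_, ?_⟩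
    · intro a ha b hab hbv
      exact ha (hab.trans' hbv)
    · intro w _ _ hall hwv
      rcases hwv with rfl | ⟨l, hl⟩
      · obtain ⟨l, hl⟩ := hcyc
        obtain ⟨e, l, rfl⟩ := List.exists_cons_of_ne_nil hl.1.ne
        exact hall e hl.1.src_eq (reaches_rng_head hl.1)
      · obtain ⟨e, l, rfl⟩ := List.exists_cons_of_ne_nil hl.ne
        exact hall e hl.src_eq (reaches_rng_head hl)
  obtain ⟨u, hu, hr⟩ := hvH (Or.inl rfl)
  exact ⟨u, hu, hr.trans' (Or.inl rfl)⟩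
end
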